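/- Let E : Fin N × Fin D → Fin M be a (K, ε)-extractor with K an integer, 0 < K ≤ N. Then for every probability distribution P on the left part Fin N with min-entropy at least log₂ K (i.e., P(x) ≤ 1/K for every x) and every set Y of right vertices, | Σ_x P(x) · (#{i ∈ Fin D : E(x,i) ∈ Y}/D) − #Y/M | ≤ ε; that is, the probability that a random edge label applied to a P-random left vertex lands in Y is ε-close to #Y/M. -/

import Mathlib

open Finset

/-- `edgeCount E S Y` is the number of edges between `S` and `Y` in the
bipartite multigraph given by `E : Fin N × Fin D → Fin M`, i.e. the number of
pairs `(x, i)` with `x ∈ S` and `E (x, i) ∈ Y`. -/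
def edgeCount {N D M : ℕ} (E : Fin N × Fin D → Fin M)
    (S : Finset (Fin N)) (Y : Finset (Fin M)) : ℕ :=
  ((S ×ˢ (univ : Finset (Fin D))).filter (fun p => E p ∈ Y)).card

/-- `E` is a `(K, ε)`-extractor: for every set `S` of at least `K` left
vertices and every set `Y` of right vertices,
`|#E(S,Y)/(D·#S) − #Y/M| < ε`. -/
def IsExtractor {N D M : ℕ} (E : Fin N × Fin D → Fin M) (K : ℕ) (ε : ℝ) : Prop :=
  ∀ (S : Finset (Fin N)) (Y : Finset (Fin M)), K ≤ S.card →
    |(edgeCount E S Y : ℝ) / (D * S.card) - (Y.card : ℝ) / M| < ε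

lemma weighted_le_topavg {N K : ℕ} (hK : 0 < K) (hKN : K ≤ N)
    (f P : Fin N → ℝ) (hP0 : ∀ x, 0 ≤ P x) (hP1 : ∑ x, P x = 1)
    (hPmin : ∀ x, P x ≤ 1 / K) :
    ∃ S : Finset (Fin N), S.card = K ∧
      ∑ x, P x * f x ≤ (∑ x ∈ S, f x) / K := by
  have hne : ((univ : Finset (Fin N)).powersetCard K).Nonempty := by
    rw [Finset.powersetCard_nonempty]
    simpa using hKN
  obtain ⟨S, hSmem, hSmax⟩ := Finset.exists_max_image _ (fun S => ∑ x ∈ S, f x) hne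
  rw [Finset.mem_powersetCard] at hSmem
  obtain ⟨-, hScard⟩ := hSmem
  refine ⟨S, hScard, ?_⟩
  have hSne : S.Nonempty := by
    rw [← Finset.card_pos, hScard]; exact hK
  obtain ⟨y, hyS, hymin⟩ := Finset.exists_min_image S f hSne
  set t := f y with ht
  have hout : ∀ x, x ∉ S → f x ≤ t := by
    intro x hx
    by_contra hlt
    push_neg at hlt
    have hmem : insert x (S.erase y) ∈ (univ : Finset (Fin N)).powersetCard K := by
      rw [Finset.mem_powersetCard]
      refine ⟨Finset.subset_univ _, ?_⟩
      rw [Finset.card_insert_of_notMem (by simp [hx, Finset.mem_erase]),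
        Finset.card_erase_of_mem hyS, hScard]
      omega
    have := hSmax _ hmem
    have hsum : ∑ z ∈ insert x (S.erase y), f z = ∑ z ∈ S, f z - f y + f x := by
      rw [Finset.sum_insert (by simp [hx, Finset.mem_erase]),
        Finset.sum_erase_eq_sub hyS]
      ring
    rw [hsum] at this
    linarith
  have hKpos : (0:ℝ) < K := by exact_mod_cast hK
  have hsplit : ∑ x, P x * (f x - t)
      = ∑ x ∈ S, P x * (f x - t) + ∑ x ∈ Sᶜ, P x * (f x - t) :=
    (Finset.sum_add_sum_compl S _).symm
  have h1 : ∑ x ∈ S, P x * (f x - t) ≤ ∑ x ∈ S, (1/K) * (f x - t) := by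
    apply Finset.sum_le_sum
    intro x hx
    exact mul_le_mul_of_nonneg_right (hPmin x) (by linarith [hymin x hx])
  have h2 : ∑ x ∈ Sᶜ, P x * (f x - t) ≤ 0 := by
    apply Finset.sum_nonpos
    intro x hx
    rw [Finset.mem_compl] at hx
    exact mul_nonpos_of_nonneg_of_nonpos (hP0 x) (by linarith [hout x hx])
  have h3 : ∑ x ∈ S, (1/K) * (f x - t) = (∑ x ∈ S, f x) / K - t := by
    rw [← Finset.mul_sum, Finset.sum_sub_distrib, Finset.sum_const, hScard,
      nsmul_eq_mul]
    field_simp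
  have h4 : ∑ x, P x * (f x - t) = ∑ x, P x * f x - t := by
    have : ∑ x, P x * (f x - t) = ∑ x, P x * f x - (∑ x, P x) * t := by
      rw [Finset.sum_mul, ← Finset.sum_sub_distrib]; ring_nf; exact Finset.sum_congr rfl (fun _ _ => by ring)
    rw [this, hP1, one_mul]
  linarith

lemma edgeCount_eq {N D M : ℕ} (E : Fin N × Fin D → Fin M)
    (S : Finset (Fin N)) (Y : Finset (Fin M)) :
    ((S ×ˢ (univ : Finset (Fin D))).filter (fun p => E p ∈ Y)).card
      = ∑ x ∈ S, ((univ.filter (fun i : Fin D => E (x, i) ∈ Y)).card) := by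
  rw [Finset.card_filter, Finset.sum_product]
  congr 1
  ext x
  rw [Finset.card_filter]

/-- A `(K, ε)`-extractor works for every distribution `P` on the left part
with min-entropy at least `log₂ K` (i.e. `P x ≤ 1/K` for all `x`): the
probability that a uniformly random edge label applied to a `P`-random left
vertex lands in `Y` is `ε`-close to `#Y/M`. -/
theorem extractor_min_entropy {N D M : ℕ} (E : Fin N × Fin D → Fin M)
    (K : ℕ) (ε : ℝ) (hK : 0 < K) (hKN : K ≤ N)
    (hext : IsExtractor E K ε)
    (P : Fin N → ℝ) (hP0 : ∀ x, 0 ≤ P x) (hP1 : ∑ x, P x = 1)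
    (hPmin : ∀ x, P x ≤ 1 / K)
    (Y : Finset (Fin M)) :
    |(∑ x, P x * (((univ.filter (fun i : Fin D => E (x, i) ∈ Y)).card : ℝ) / D))
        - (Y.card : ℝ) / M| ≤ ε := by
  set f : Fin N → ℝ :=
    fun x => ((univ.filter (fun i : Fin D => E (x, i) ∈ Y)).card : ℝ) / D with hf
  set μ : ℝ := (Y.card : ℝ) / M with hμ
  -- for any S of card K, the average of f over S equals edgeCount/(D*K)
  have havg : ∀ S : Finset (Fin N), S.card = K →
      (∑ x ∈ S, f x) / K = (edgeCount E S Y : ℝ) / (D * S.card) := by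
    intro S hS
    have : (edgeCount E S Y : ℝ)
        = ∑ x ∈ S, ((univ.filter (fun i : Fin D => E (x, i) ∈ Y)).card : ℝ) := by
      rw [edgeCount, edgeCount_eq]
      push_cast
      rfl
    rw [this, hS, hf]
    rw [← Finset.sum_div, div_div, mul_comm (D:ℝ) (K:ℝ)]
  -- upper bound
  obtain ⟨S₁, hS₁, hle₁⟩ := weighted_le_topavg hK hKN f P hP0 hP1 hPmin
  have hext₁ := hext S₁ Y (le_of_eq hS₁.symm)
  rw [← havg S₁ hS₁] at hext₁
  -- lower bound
  obtain ⟨S₂, hS₂, hle₂⟩ := weighted_le_topavg hK hKN (fun x => -f x) P hP0 hP1 hPmin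
  have hext₂ := hext S₂ Y (le_of_eq hS₂.symm)
  rw [← havg S₂ hS₂] at hext₂
  have hle₂' : (∑ x ∈ S₂, f x) / K ≤ ∑ x, P x * f x := by
    have h1 : ∑ x, P x * (-f x) = -(∑ x, P x * f x) := by
      rw [← Finset.sum_neg_distrib]; congr 1; ext x; ring
    have h2 : (∑ x ∈ S₂, -f x) / (K:ℝ) = -((∑ x ∈ S₂, f x) / K) := by
      rw [Finset.sum_neg_distrib, neg_div]
    rw [h1, h2] at hle₂
    linarith
  rw [abs_lt] at hext₁ hext₂
  rw [abs_le]
  constructor <;> linarith
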